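/- Let N and k both be even positive integers, and let m be a divisor of N such that 2*m^2 divides N*k. Then the number of divisors d of N satisfying gcd(d, N*k/(2*d)) = m is exactly 2^(p_m + t_m). -/

import Mathlib

def myeps (p : ℕ) : ℕ := if p = 2 then 1 else 0

lemma fact_two (p : ℕ) : (2:ℕ).factorization p = myeps p := by
  rw [Nat.Prime.factorization Nat.prime_two, Finsupp.single_apply, myeps]
  simp [eq_comm]

/-- the set of "switchable" primes -/
def Qset (N k m : ℕ) : Finset ℕ :=
  N.primeFactors.filter (fun p =>
    k.factorization p ≤ m.factorization p + myeps p ∧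
    2 * m.factorization p + myeps p < N.factorization p + k.factorization p)

lemma card_eq_pow_Qcard (N k m : ℕ) (hN : 0 < N) (hk : 0 < k) (hkeven : Even k)
    (hm : m ∣ N) (hm2 : 2 * m ^ 2 ∣ N * k) :
    (N.divisors.filter (fun d => Nat.gcd d (N * k / (2 * d)) = m)).card
      = 2 ^ (Qset N k m).card := by
  have hN0 : N ≠ 0 := hN.ne'
  have hk0 : k ≠ 0 := hk.ne'
  have hm0 : m ≠ 0 := by rintro rfl; simp at hm; omega
  have hk2 : 2 ∣ k := hkeven.two_dvd
  set M := N * k / 2 with hMdef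
  have hNM : N ∣ M := by
    rw [hMdef, Nat.mul_div_assoc N hk2]; exact Dvd.intro _ rfl
  have h2Nk : 2 ∣ N * k := Dvd.dvd.mul_left hk2 N
  have hM0 : M ≠ 0 :=
    (Nat.div_pos (Nat.le_of_dvd (by positivity) h2Nk) two_pos).ne'
  -- pointwise facts
  have hμn : ∀ q, m.factorization q ≤ N.factorization q := fun q =>
    (Nat.factorization_le_iff_dvd hm0 hN0).2 hm q
  have hkey : ∀ q, 2 * m.factorization q + myeps q
      ≤ N.factorization q + k.factorization q := by
    intro q
    have h := (Nat.factorization_le_iff_dvd (by positivity) (by positivity)).2 hm2 q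
    rw [Nat.factorization_mul two_ne_zero (pow_ne_zero 2 hm0), Nat.factorization_pow,
      Nat.factorization_mul hN0 hk0] at h
    simp only [Finsupp.coe_add, Finsupp.coe_smul, Pi.add_apply, Pi.smul_apply,
      smul_eq_mul, fact_two] at h
    omega
  have hMfact : ∀ q, M.factorization q
      = N.factorization q + k.factorization q - myeps q := by
    intro q
    rw [hMdef, Nat.factorization_div h2Nk, Nat.factorization_mul hN0 hk0]
    simp [fact_two]
  have hkfe : ∀ q, myeps q ≤ k.factorization q := by
    intro q
    rw [myeps]
    split
    · next h => subst h; exact (Nat.Prime.dvd_iff_one_le_factorization Nat.prime_two hk0).1 hk2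
    · omega
  -- the exponent function
  set e : ℕ → ℕ := fun p =>
    N.factorization p + k.factorization p - myeps p - 2 * m.factorization p with he
  -- membership facts about Qset
  have hQmem : ∀ p, p ∈ Qset N k m ↔ p.Prime ∧ p ∣ N ∧
      k.factorization p ≤ m.factorization p + myeps p ∧
      2 * m.factorization p + myeps p < N.factorization p + k.factorization p := by
    intro p
    simp only [Qset, Finset.mem_filter, Nat.mem_primeFactors]
    tauto
  -- factorization of the image
  have hD0 : ∀ T : Finset ℕ, T ⊆ Qset N k m → (m * ∏ p ∈ T, p ^ e p) ≠ 0 := by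
    intro T hT
    have : ∀ p ∈ T, p ^ e p ≠ 0 := fun p hp =>
      pow_ne_zero _ ((hQmem p).1 (hT hp)).1.pos.ne'
    exact mul_ne_zero hm0 (Finset.prod_ne_zero_iff.2 this)
  have hDfact : ∀ T : Finset ℕ, T ⊆ Qset N k m → ∀ q,
      (m * ∏ p ∈ T, p ^ e p).factorization q
        = m.factorization q + (if q ∈ T then e q else 0) := by
    intro T hT q
    have hne : ∀ p ∈ T, p ^ e p ≠ 0 := fun p hp =>
      pow_ne_zero _ ((hQmem p).1 (hT hp)).1.pos.ne'
    rw [Nat.factorization_mul hm0 (Finset.prod_ne_zero_iff.2 hne),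
      Nat.factorization_prod hne]
    simp only [Finsupp.coe_add, Pi.add_apply]
    congr 1
    rw [Finset.sum_apply']
    rw [Finset.sum_congr rfl (fun p hp => ?_), Finset.sum_ite_eq' T q e]
    rw [Nat.Prime.factorization_pow ((hQmem p).1 (hT hp)).1, Finsupp.single_apply]
  -- characterization of solutions
  have hsol : ∀ d, d ∈ N.divisors.filter
      (fun d => Nat.gcd d (N * k / (2 * d)) = m) ↔
      d ≠ 0 ∧ d ∣ N ∧ ∀ q, min (d.factorization q)
        (M.factorization q - d.factorization q) = m.factorization q := by
    intro d
    simp only [Finset.mem_filter, Nat.mem_divisors]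
    constructor
    · rintro ⟨⟨hdN, -⟩, hg⟩
      have hd0 : d ≠ 0 := by rintro rfl; simp at hdN; exact hN0 hdN
      refine ⟨hd0, hdN, fun q => ?_⟩
      have hdM : d ∣ M := hdN.trans hNM
      have hMd0 : M / d ≠ 0 :=
        (Nat.div_pos (Nat.le_of_dvd (Nat.pos_of_ne_zero hM0) hdM)
          (Nat.pos_of_ne_zero hd0)).ne'
      rw [← Nat.div_div_eq_div_mul, ← hMdef] at hg
      have := congrArg (fun f : ℕ →₀ ℕ => f q)
        ((Nat.factorization_gcd hd0 hMd0).symm.trans (congrArg Nat.factorization hg))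
      simp only [Finsupp.inf_apply, Nat.factorization_div hdM, Finsupp.tsub_apply] at this
      exact this
    · rintro ⟨hd0, hdN, hmin⟩
      refine ⟨⟨hdN, hN0⟩, ?_⟩
      have hdM : d ∣ M := hdN.trans hNM
      have hMd0 : M / d ≠ 0 :=
        (Nat.div_pos (Nat.le_of_dvd (Nat.pos_of_ne_zero hM0) hdM)
          (Nat.pos_of_ne_zero hd0)).ne'
      rw [← Nat.div_div_eq_div_mul, ← hMdef]
      refine Nat.factorization_inj (Nat.gcd_ne_zero_left hd0) hm0 ?_
      rw [Nat.factorization_gcd hd0 hMd0]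
      ext q
      simp only [Finsupp.inf_apply, Nat.factorization_div hdM, Finsupp.tsub_apply]
      exact hmin q
  rw [← Finset.card_powerset]
  refine (Finset.card_nbij' (fun d => (Qset N k m).filter
      (fun p => m.factorization p < d.factorization p))
    (fun T => m * ∏ p ∈ T, p ^ e p) ?_ ?_ ?_ ?_)
  · -- solutions → powerset
    intro d _
    exact Finset.mem_powerset.2 (Finset.filter_subset _ _)
  · -- powerset → solutions
    intro T hT
    rw [Finset.mem_coe, Finset.mem_powerset] at hT
    rw [Finset.mem_coe, hsol]
    refine ⟨hD0 T hT, ?_, ?_⟩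
    · rw [← Nat.factorization_le_iff_dvd (hD0 T hT) hN0]
      intro q
      rw [hDfact T hT q]
      by_cases hq : q ∈ T
      · have hQ := ((hQmem q).1 (hT hq)).2.2
        have h1 := hμn q; have h2 := hkey q
        simp only [hq, if_true, he]
        omega
      · simp only [hq, if_false]
        simpa using hμn q
    · intro q
      rw [hDfact T hT q, hMfact q]
      have h1 := hμn q; have h2 := hkey q
      by_cases hq : q ∈ T
      · have hQ := ((hQmem q).1 (hT hq)).2.2
        simp only [hq, if_true, he]
        omega
      · simp only [hq, if_false, he]
        omega
  ·
    intro d hd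
    rw [Finset.mem_coe, hsol] at hd
    obtain ⟨hd0, hdN, hmin⟩ := hd
    have hT : (Qset N k m).filter (fun p => m.factorization p < d.factorization p)
        ⊆ Qset N k m := Finset.filter_subset _ _
    refine Nat.factorization_inj (hD0 _ hT) hd0 ?_
    ext q
    rw [hDfact _ hT q]
    have h1 := hμn q; have h2 := hkey q
    have hdn : d.factorization q ≤ N.factorization q :=
      (Nat.factorization_le_iff_dvd hd0 hN0).2 hdN q
    have hminq := hmin q
    have hMq := hMfact q
    have hdM : d.factorization q ≤ M.factorization q :=
      (Nat.factorization_le_iff_dvd hd0 hM0).2 (hdN.trans hNM) q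
    by_cases hlt : m.factorization q < d.factorization q
    · -- switched prime
      have hq1 : q.Prime := by
        have : q ∈ d.primeFactors := by
          rw [← Nat.support_factorization, Finsupp.mem_support_iff]
          omega
        exact Nat.prime_of_mem_primeFactors this
      have hqN : q ∣ N :=
        dvd_trans ((hq1.dvd_iff_one_le_factorization hd0).2 (by omega)) hdN
      have hqQ : q ∈ Qset N k m := by
        rw [hQmem]
        refine ⟨hq1, hqN, ?_, ?_⟩ <;> omega
      have hqT : q ∈ (Qset N k m).filter
          (fun p => m.factorization p < d.factorization p) :=
        Finset.mem_filter.2 ⟨hqQ, hlt⟩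
      rw [if_pos hqT]
      simp only [he]
      omega
    · have : q ∉ (Qset N k m).filter (fun p => m.factorization p < d.factorization p) := by
        rw [Finset.mem_filter]; tauto
      rw [if_neg this]
      omega
  · -- right inverse : j (i T) = T for T in powerset
    intro T hT
    rw [Finset.mem_coe, Finset.mem_powerset] at hT
    ext p
    simp only [Finset.mem_filter]
    constructor
    · rintro ⟨hpQ, hlt⟩
      rw [hDfact T hT p] at hlt
      by_contra hp
      simp [hp] at hlt
    · intro hp
      have hpQ := hT hp
      refine ⟨hpQ, ?_⟩
      rw [hDfact T hT p]
      have hQ := ((hQmem p).1 hpQ).2.2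
      simp only [hp, if_true, he]
      omega



/-- `p_m`: the number of odd primes dividing `N*m'/m^2` but not `k/m'`, where `m' = gcd(m,k)`. -/
def pm (N k m : ℕ) : ℕ :=
  ((N * Nat.gcd m k / m ^ 2).primeFactors.filter
    (fun p => p ≠ 2 ∧ ¬ p ∣ k / Nat.gcd m k)).card

/-- `t_m`: equal to `0` if `N*m'/m^2` is odd, or `4 ∣ k/m'`, or both
`N*m'/m^2 ≡ 2 (mod 4)` and `k/m'` is odd; and equal to `1` otherwise. -/
def tm (N k m : ℕ) : ℕ :=
  if Odd (N * Nat.gcd m k / m ^ 2) ∨ 4 ∣ k / Nat.gcd m k ∨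
      ((N * Nat.gcd m k / m ^ 2) % 4 = 2 ∧ Odd (k / Nat.gcd m k)) then 0 else 1


lemma pm_add_tm (N k m : ℕ) (hN : 0 < N) (hNeven : Even N)
    (hk : 0 < k) (hkeven : Even k) (hm : m ∣ N) (hm2 : 2 * m ^ 2 ∣ N * k) :
    pm N k m + tm N k m = (Qset N k m).card := by
  have hN0 : N ≠ 0 := hN.ne'
  have hk0 : k ≠ 0 := hk.ne'
  have hm0 : m ≠ 0 := by rintro rfl; simp at hm; omega
  have hm'0 : Nat.gcd m k ≠ 0 := Nat.gcd_ne_zero_left hm0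
  have hm'fact : ∀ q, (Nat.gcd m k).factorization q
      = min (m.factorization q) (k.factorization q) := by
    intro q
    rw [Nat.factorization_gcd hm0 hk0]
    simp [Finsupp.inf_apply]
  have hm2N : m ^ 2 ∣ N * Nat.gcd m k := by
    rw [← Nat.gcd_mul_left]
    exact Nat.dvd_gcd (by rw [pow_two]; exact mul_dvd_mul hm dvd_rfl)
      ((dvd_mul_left _ _).trans hm2)
  set X := N * Nat.gcd m k / m ^ 2 with hXdef
  set Y := k / Nat.gcd m k with hYdef
  have hX0 : X ≠ 0 :=
    (Nat.div_pos (Nat.le_of_dvd (by positivity) hm2N) (by positivity)).ne'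
  have hY0 : Y ≠ 0 :=
    (Nat.div_pos (Nat.le_of_dvd hk (Nat.gcd_dvd_right m k)) (Nat.pos_of_ne_zero hm'0)).ne'
  have hXfact : ∀ q, X.factorization q = N.factorization q
      + min (m.factorization q) (k.factorization q) - 2 * m.factorization q := by
    intro q
    rw [hXdef, Nat.factorization_div hm2N, Nat.factorization_mul hN0 hm'0,
      Nat.factorization_pow]
    simp [hm'fact q, two_mul]
  have hYfact : ∀ q, Y.factorization q
      = k.factorization q - min (m.factorization q) (k.factorization q) := by
    intro q
    rw [hYdef, Nat.factorization_div (Nat.gcd_dvd_right m k)]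
    simp [hm'fact q]
  have hμn : ∀ q, m.factorization q ≤ N.factorization q := fun q =>
    (Nat.factorization_le_iff_dvd hm0 hN0).2 hm q
  have hkey : ∀ q, 2 * m.factorization q + myeps q
      ≤ N.factorization q + k.factorization q := by
    intro q
    have h := (Nat.factorization_le_iff_dvd (by positivity) (by positivity)).2 hm2 q
    rw [Nat.factorization_mul two_ne_zero (pow_ne_zero 2 hm0), Nat.factorization_pow,
      Nat.factorization_mul hN0 hk0] at h
    simp only [Finsupp.coe_add, Finsupp.coe_smul, Pi.add_apply, Pi.smul_apply,
      smul_eq_mul, fact_two] at h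
    omega
  have hQmem : ∀ p, p ∈ Qset N k m ↔ p.Prime ∧ p ∣ N ∧
      k.factorization p ≤ m.factorization p + myeps p ∧
      2 * m.factorization p + myeps p < N.factorization p + k.factorization p := by
    intro p
    simp only [Qset, Finset.mem_filter, Nat.mem_primeFactors]
    tauto
  have hNf2 : 1 ≤ N.factorization 2 :=
    (Nat.Prime.dvd_iff_one_le_factorization Nat.prime_two hN0).1 hNeven.two_dvd
  have hkf2 : 1 ≤ k.factorization 2 :=
    (Nat.Prime.dvd_iff_one_le_factorization Nat.prime_two hk0).1 hkeven.two_dvd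
  -- odd part
  have hQodd : X.primeFactors.filter (fun p => p ≠ 2 ∧ ¬ p ∣ Y)
      = (Qset N k m).filter (fun p => ¬ p = 2) := by
    ext p
    simp only [Finset.mem_filter, Nat.mem_primeFactors, hQmem p]
    constructor
    · rintro ⟨⟨hp, hpX, -⟩, hp2, hpY⟩
      rw [hp.dvd_iff_one_le_factorization hX0, hXfact p] at hpX
      rw [hp.dvd_iff_one_le_factorization hY0, hYfact p] at hpY
      have h1 := hμn p; have h2 := hkey p
      have hε : myeps p = 0 := by simp [myeps, hp2]
      refine ⟨⟨hp, ?_, ?_, ?_⟩, hp2⟩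
      · rw [hp.dvd_iff_one_le_factorization hN0]; omega
      · omega
      · omega
    · rintro ⟨⟨hp, hpN, hc1, hc2⟩, hp2⟩
      rw [hp.dvd_iff_one_le_factorization hN0] at hpN
      have h1 := hμn p; have h2 := hkey p
      have hε : myeps p = 0 := by simp [myeps, hp2]
      refine ⟨⟨hp, ?_, hX0⟩, hp2, ?_⟩
      · rw [hp.dvd_iff_one_le_factorization hX0, hXfact p]; omega
      · rw [hp.dvd_iff_one_le_factorization hY0, hYfact p]; omega
  -- even part
  have h2Q : 2 ∈ Qset N k m ↔ (k.factorization 2 ≤ m.factorization 2 + 1 ∧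
      2 * m.factorization 2 + 1 < N.factorization 2 + k.factorization 2) := by
    rw [hQmem 2]
    simp [Nat.prime_two, hNeven.two_dvd, myeps]
  have hOX : Odd X ↔ X.factorization 2 = 0 := by
    rw [← Nat.not_even_iff_odd, even_iff_two_dvd,
      Nat.Prime.dvd_iff_one_le_factorization Nat.prime_two hX0]
    omega
  have hOY : Odd Y ↔ Y.factorization 2 = 0 := by
    rw [← Nat.not_even_iff_odd, even_iff_two_dvd,
      Nat.Prime.dvd_iff_one_le_factorization Nat.prime_two hY0]
    omega
  have h4Y : 4 ∣ Y ↔ 2 ≤ Y.factorization 2 := by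
    rw [show (4:ℕ) = 2 ^ 2 from rfl,
      Nat.Prime.pow_dvd_iff_le_factorization Nat.prime_two hY0]
  have hX4 : X % 4 = 2 ↔ X.factorization 2 = 1 := by
    have h2X : 2 ∣ X ↔ 1 ≤ X.factorization 2 :=
      Nat.Prime.dvd_iff_one_le_factorization Nat.prime_two hX0
    have h4X : 4 ∣ X ↔ 2 ≤ X.factorization 2 := by
      rw [show (4:ℕ) = 2 ^ 2 from rfl,
        Nat.Prime.pow_dvd_iff_le_factorization Nat.prime_two hX0]
    omega
  have htm : tm N k m = if 2 ∈ Qset N k m then 1 else 0 := by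
    rw [tm, ← hXdef, ← hYdef]
    have hXf := hXfact 2; have hYf := hYfact 2
    have h1 := hμn 2; have h2 := hkey 2
    have hε : myeps 2 = 1 := by simp [myeps]
    by_cases hc : Odd X ∨ 4 ∣ Y ∨ (X % 4 = 2 ∧ Odd Y)
    · rw [if_pos hc, if_neg]
      rw [hOX, h4Y, hX4, hOY] at hc
      rw [h2Q]
      omega
    · rw [if_neg hc, if_pos]
      rw [hOX, h4Y, hX4, hOY] at hc
      push_neg at hc
      rw [h2Q]
      omega
  -- assemble
  have e1 : pm N k m = ((Qset N k m).filter (fun p => ¬ p = 2)).card := by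
    unfold pm
    rw [← hXdef, ← hYdef, hQodd]
  have e2 : tm N k m = ((Qset N k m).filter (fun p => p = 2)).card := by
    rw [htm, Finset.filter_eq']
    split <;> simp
  rw [e1, e2, add_comm,
    Finset.card_filter_add_card_filter_not (s := Qset N k m) (p := fun p => p = 2)]

theorem card_divisors_with_gcd_eq_even_even_case (N k m : ℕ) (hN : 0 < N) (hNeven : Even N)
    (hk : 0 < k) (hkeven : Even k) (hm : m ∣ N) (hm2 : 2 * m ^ 2 ∣ N * k) :
    (N.divisors.filter (fun d => Nat.gcd d (N * k / (2 * d)) = m)).card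
      = 2 ^ (pm N k m + tm N k m) := by
  rw [card_eq_pow_Qcard N k m hN hk hkeven hm hm2,
    pm_add_tm N k m hN hNeven hk hkeven hm hm2]
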